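/- If a set of prototiles has the property that every tile set either admits no tiling of the plane or admits a periodic tiling, then the Tiling Problem for such sets is decidable: enumerate configurations covering larger and larger disks until either no configuration extends (answer No) or a fundamental domain is found (answer Yes). Equivalently: if the Tiling Problem is undecidable, then there exists an aperiodic set of tiles, i.e., a set that admits a tiling but admits no periodic tiling. -/

import Mathlib

/-- A Wang tile: edge colors (north, south, east, west), colors coded by naturals. -/
abbrev WangTile : Type := ℕ × ℕ × ℕ × ℕ

def WangTile.north (t : WangTile) : ℕ := t.1
def WangTile.south (t : WangTile) : ℕ := t.2.1
def WangTile.east (t : WangTile) : ℕ := t.2.2.1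
def WangTile.west (t : WangTile) : ℕ := t.2.2.2

/-- `f : ℤ² → WangTile` is a valid tiling of the plane by the tile set `T`:
every tile used lies in `T` and adjacent edge colors match. -/
def IsWangTiling (T : Finset WangTile) (f : ℤ × ℤ → WangTile) : Prop :=
  (∀ x, f x ∈ T) ∧
  (∀ x y : ℤ, (f (x, y)).east = (f (x + 1, y)).west) ∧
  (∀ x y : ℤ, (f (x, y)).north = (f (x, y + 1)).south)

/-- The tile set `T` admits a tiling of the plane. -/
def WangTiles (T : Finset WangTile) : Prop := ∃ f, IsWangTiling T f

/-- The tile set `T` admits a periodic tiling: one invariant under a nonzero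
translation. -/
def WangTilesPeriodically (T : Finset WangTile) : Prop :=
  ∃ f, IsWangTiling T f ∧ ∃ v : ℤ × ℤ, v ≠ 0 ∧ ∀ x, f (x + v) = f x

namespace WangAux
open Denumerable Encodable

def tr (t : WangTile) : WangTile := (t.2.2.1, t.2.2.2, t.1, t.2.1)

lemma tr_tr (t : WangTile) : tr (tr t) = t := rfl

def getT (s : List WangTile) (m : ℕ) : WangTile := s.getD m (0, 0, 0, 0)

def tuples (l : List WangTile) : ℕ → List (List WangTile)
  | 0 => [[]]
  | k + 1 => (tuples l k).flatMap fun s => l.map (· :: s)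

lemma mem_tuples {l : List WangTile} :
    ∀ {k} {s : List WangTile}, s ∈ tuples l k ↔ s.length = k ∧ ∀ t ∈ s, t ∈ l := by
  intro k
  induction k with
  | zero =>
    intro s
    constructor
    · intro hs
      simp only [tuples, List.mem_singleton] at hs
      subst hs; simp
    · rintro ⟨h1, -⟩
      simp only [tuples, List.mem_singleton]
      exact List.length_eq_zero_iff.1 h1
  | succ k ih =>
    intro s
    simp only [tuples, List.mem_flatMap, List.mem_map]
    constructor
    · rintro ⟨s', hs', t, ht, rfl⟩
      obtain ⟨h1, h2⟩ := ih.1 hs'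
      refine ⟨by simp [h1], ?_⟩
      intro u hu
      rcases List.mem_cons.1 hu with rfl | hu
      · exact ht
      · exact h2 u hu
    · rintro ⟨h1, h2⟩
      cases s with
      | nil => simp at h1
      | cons t s' =>
        exact ⟨s', ih.2 ⟨by simpa using h1, fun u hu => h2 u (List.mem_cons_of_mem _ hu)⟩,
          t, h2 t List.mem_cons_self, rfl⟩

def sqB (s : List WangTile) (n : ℕ) : Bool :=
  (List.range n).all fun j => (List.range n).all fun i =>
    ((!decide (i + 1 < n)) ||
      decide ((getT s (i + n * j)).east = (getT s (i + 1 + n * j)).west)) &&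
    ((!decide (j + 1 < n)) ||
      decide ((getT s (i + n * j)).north = (getT s (i + n * (j + 1))).south))

lemma sqB_iff {s : List WangTile} {n : ℕ} :
    sqB s n = true ↔ ∀ i j, i < n → j < n →
      (i + 1 < n → (getT s (i + n * j)).east = (getT s (i + 1 + n * j)).west) ∧
      (j + 1 < n → (getT s (i + n * j)).north = (getT s (i + n * (j + 1))).south) := by
  simp only [sqB, List.all_eq_true, List.mem_range, Bool.and_eq_true, Bool.or_eq_true,
    Bool.not_eq_true', decide_eq_true_eq, decide_eq_false_iff_not]
  constructor
  · intro H i j hi hj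
    obtain ⟨h1, h2⟩ := H j hj i hi
    exact ⟨fun h => h1.resolve_left (by omega), fun h => h2.resolve_left (by omega)⟩
  · intro H j hj i hi
    obtain ⟨h1, h2⟩ := H i j hi hj
    constructor
    · by_cases h : i + 1 < n
      · exact Or.inr (h1 h)
      · exact Or.inl h
    · by_cases h : j + 1 < n
      · exact Or.inr (h2 h)
      · exact Or.inl h

def trB (s : List WangTile) (n : ℕ) : Bool :=
  decide (1 ≤ n) &&
  ((List.range n).all fun j => (List.range n).all fun i =>
    decide ((getT s (i + n * j)).east = (getT s ((i + 1) % n + n * j)).west) &&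
    decide ((getT s (i + n * j)).north = (getT s (i + n * ((j + 1) % n))).south))

lemma trB_iff {s : List WangTile} {n : ℕ} :
    trB s n = true ↔ 1 ≤ n ∧ ∀ i j, i < n → j < n →
      (getT s (i + n * j)).east = (getT s ((i + 1) % n + n * j)).west ∧
      (getT s (i + n * j)).north = (getT s (i + n * ((j + 1) % n))).south := by
  simp only [trB, Bool.and_eq_true, List.all_eq_true, List.mem_range, decide_eq_true_eq]
  exact ⟨fun ⟨h1, h2⟩ => ⟨h1, fun i j hi hj => (h2 j hj i hi).imp id id⟩,
    fun ⟨h1, h2⟩ => ⟨h1, fun j hj i hi => (h2 i j hi hj).imp id id⟩⟩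

def raiseStep : (ℕ × List ℕ) → ℕ → (ℕ × List ℕ) := fun st m => (m + st.1 + 1, st.2 ++ [m + st.1])

def raiseF (l : List ℕ) : List ℕ := (l.foldl raiseStep (0, [])).2

lemma foldl_raiseStep (l : List ℕ) :
    ∀ n out, (l.foldl raiseStep (n, out)).2 = out ++ Denumerable.raise' l n := by
  induction l with
  | nil => intro n out; simp [Denumerable.raise']
  | cons m l ih => intro n out; simp [Denumerable.raise', raiseStep, ih]

lemma raiseF_eq (l : List ℕ) : raiseF l = Denumerable.raise' l 0 := by
  simp [raiseF, foldl_raiseStep]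

def elems (T : Finset WangTile) : List WangTile :=
  (raiseF (ofNat (List ℕ) (eqv (Finset WangTile) T))).map (ofNat WangTile)

lemma mem_elems {T : Finset WangTile} {t : WangTile} : t ∈ elems T ↔ t ∈ T := by
  have h : ofNat (Finset WangTile) (eqv (Finset WangTile) T) =
      Finset.map (eqv WangTile).symm.toEmbedding
        (Denumerable.raise'Finset (ofNat (List ℕ) (eqv (Finset WangTile) T)) 0) :=
    ofNat_of_decode rfl
  have h2 : ofNat (Finset WangTile) (eqv (Finset WangTile) T) = T :=
    (eqv (Finset WangTile)).symm_apply_apply T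
  rw [h2] at h
  conv_rhs => rw [h]
  simp only [elems, raiseF_eq, List.mem_map, Finset.mem_map, Denumerable.raise'Finset,
    Finset.mem_mk, Multiset.mem_coe]
  constructor
  · rintro ⟨k, hk, rfl⟩; exact ⟨k, hk, rfl⟩
  · rintro ⟨k, hk, rfl⟩; exact ⟨k, hk, rfl⟩

end WangAux
namespace WangAux

@[simp] lemma north_tr (t : WangTile) : (tr t).north = t.east := rfl
@[simp] lemma south_tr (t : WangTile) : (tr t).south = t.west := rfl
@[simp] lemma east_tr (t : WangTile) : (tr t).east = t.north := rfl
@[simp] lemma west_tr (t : WangTile) : (tr t).west = t.south := rfl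

/-- The set of translation periods of a configuration, as an additive subgroup. -/
def periods (g : ℤ × ℤ → WangTile) : AddSubgroup (ℤ × ℤ) where
  carrier := {v | ∀ p, g (p + v) = g p}
  zero_mem' := by intro p; simp
  add_mem' := by
    intro u v hu hv p
    rw [← add_assoc, hv (p + u)]  -- careful order
    exact hu p
  neg_mem' := by
    intro u hu p
    have := hu (p + -u)
    simpa using this.symm

lemma mem_periods {g : ℤ × ℤ → WangTile} {v : ℤ × ℤ} :
    v ∈ periods g ↔ ∀ p, g (p + v) = g p := Iff.rfl

/-- Transposing a valid tiling gives a valid tiling of the transposed tile set. -/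
lemma tiling_tr {T : Finset WangTile} {f : ℤ × ℤ → WangTile} (hf : IsWangTiling T f) :
    IsWangTiling (T.image tr) (fun p => tr (f p.swap)) := by
  obtain ⟨hmem, hew, hns⟩ := hf
  refine ⟨fun p => Finset.mem_image_of_mem tr (hmem p.swap), ?_, ?_⟩
  · intro x y
    simpa using hns y x
  · intro x y
    simpa using hew y x

end WangAux
namespace WangAux

lemma core {T : Finset WangTile} {f : ℤ × ℤ → WangTile} (hf : IsWangTiling T f)
    {a b : ℤ} (hb : 0 < b) (hper : ∀ p, f (p + (a, b)) = f p) :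
    ∃ g, IsWangTiling T g ∧ ∃ P Q : ℤ, 0 < P ∧ 0 < Q ∧
      (∀ p, g (p + (P, 0)) = g p) ∧ (∀ p, g (p + (0, Q)) = g p) := by
  obtain ⟨hmem, hew, hns⟩ := hf
  obtain ⟨A, hA1, hA2, hA0⟩ : ∃ A : ℤ, a ≤ A ∧ -A ≤ a ∧ 0 ≤ A :=
    ⟨|a|, le_abs_self a, neg_abs_le a, abs_nonneg a⟩
  set w : ℤ := A + 1 with hw
  set W : ℤ := 2 * w with hWdef
  set Wn : ℕ := W.toNat with hWn
  set bn : ℕ := b.toNat with hbn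
  -- pigeonhole on blocks of width W in the strip 0 ≤ y < b
  let Φ : ℤ → Fin Wn → Fin bn → {t // t ∈ T} :=
    fun t i j => ⟨f (t * W + (i : ℕ), ((j : ℕ) : ℤ)), hmem _⟩
  obtain ⟨u, v, huv, hΦ⟩ := Finite.exists_ne_map_eq_of_infinite Φ
  set t₁ := min u v with ht₁
  set t₂ := max u v with ht₂
  have hlt : t₁ < t₂ := min_lt_max.2 huv
  have hΦ' : Φ t₁ = Φ t₂ := by
    rcases le_total u v with h | h
    · rw [ht₁, ht₂, min_eq_left h, max_eq_right h]; exact hΦ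
    · rw [ht₁, ht₂, min_eq_right h, max_eq_left h]; exact hΦ.symm
  set P : ℤ := (t₂ - t₁) * W with hPdef
  have hPW : W ≤ P := by nlinarith
  have hP0 : 0 < P := by nlinarith
  set x1 : ℤ := t₁ * W + w with hx1
  -- the alignment fact coming from the equal blocks
  have AL : ∀ i j : ℤ, -w ≤ i → i < w → 0 ≤ j → j < b → f (x1 + i + P, j) = f (x1 + i, j) := by
    intro i j h1 h2 h3 h4
    have hiW : (i + w).toNat < Wn := by omega
    have hjb : j.toNat < bn := by omega
    have hval := congrArg Subtype.val (congrFun (congrFun hΦ' ⟨(i + w).toNat, hiW⟩) ⟨j.toNat, hjb⟩)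
    simp only [Φ] at hval
    have hc1 : (((i + w).toNat : ℕ) : ℤ) = i + w := by omega
    have hc2 : ((j.toNat : ℕ) : ℤ) = j := by omega
    rw [hc1, hc2] at hval
    have e1 : x1 + i + P = t₂ * W + (i + w) := by rw [hx1, hPdef]; ring
    have e2 : x1 + i = t₁ * W + (i + w) := by rw [hx1]; ring
    rw [e1, e2]
    exact hval.symm
  -- the periodized strip-coordinate function
  set r : ℤ → ℤ := fun x => x1 + (x - x1) % P with hr
  have hm0 : ∀ x : ℤ, 0 ≤ (x - x1) % P := fun x => Int.emod_nonneg _ (ne_of_gt hP0)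
  have hm1 : ∀ x : ℤ, (x - x1) % P < P := fun x => Int.emod_lt_of_pos _ hP0
  have hmodeq : ∀ u k : ℤ, 0 ≤ u + P * k → u + P * k < P → u % P = u + P * k := by
    intro u k h1 h2
    conv_lhs => rw [show u = (u + P * k) + P * (-k) by ring]
    rw [Int.add_mul_emod_self_left, Int.emod_eq_of_lt h1 h2]
  have hshift : ∀ u : ℤ, (u + P) % P = u % P := by
    intro u
    conv_lhs => rw [show u + P = u + P * 1 by ring]
    exact Int.add_mul_emod_self_left (u) (P) (1)
  have hrP : ∀ x, r (x + P) = r x := by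
    intro x
    simp only [hr]
    rw [show x + P - x1 = (x - x1) + P by ring, hshift]
  have h1P : (1 : ℤ) % P = 1 := Int.emod_eq_of_lt (by norm_num) (by omega)
  have hrstep : ∀ x : ℤ, (x + 1 - x1) % P = ((x - x1) % P + 1) % P := by
    intro x
    rw [show x + 1 - x1 = (x - x1) + 1 by ring, Int.add_emod, h1P]
  -- strip horizontal matching
  have L3 : ∀ z j : ℤ, 0 ≤ j → j < b → (f (r z, j)).east = (f (r (z + 1), j)).west := by
    intro z j hj1 hj2
    have hmb := hm0 z
    have hmt := hm1 z
    by_cases hcase : (z - x1) % P + 1 < P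
    · have hstep : r (z + 1) = r z + 1 := by
        simp only [hr]
        rw [hrstep z, Int.emod_eq_of_lt (by omega) hcase]
        ring
      rw [hstep]
      exact hew (r z) j
    · have hm2 : (z - x1) % P + 1 = P := by omega
      have hr1 : r (z + 1) = x1 := by
        simp only [hr]
        rw [hrstep z, hm2, Int.emod_self]
        ring
      have hr2 : r z = x1 + (P - 1) := by simp only [hr]; omega
      rw [hr1, hr2]
      have hAL := AL 0 j (by omega) (by omega) hj1 hj2
      have hstep := hew (x1 + (P - 1)) j
      rw [show x1 + (P - 1) + 1 = x1 + 0 + P by ring, hAL] at hstep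
      simpa using hstep
  -- strip shifted-row matching
  have L2 : ∀ z j : ℤ, 0 ≤ j → j < b → f (r z - a, j) = f (r (z - a), j) := by
    intro z j hj1 hj2
    have hmb := hm0 z
    have hmt := hm1 z
    obtain ⟨q, hqe⟩ : ∃ q, z - x1 = P * q + (z - x1) % P :=
      ⟨(z - x1) / P, (Int.mul_ediv_add_emod _ _).symm⟩
    set m : ℤ := (z - x1) % P with hm
    have hm' : (z - a - x1) % P = (m - a) % P := by
      rw [show z - a - x1 = (m - a) + P * q by linarith]
      exact Int.add_mul_emod_self_left (m - a) P q
    by_cases h1 : m - a < 0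
    · have hmew : (m - a) % P = m - a + P := by
        have h := hmodeq (m - a) 1 (by omega) (by omega)
        linarith
      have hrz : r (z - a) = (x1 + (m - a)) + P := by
        simp only [hr, ← hm]
        rw [hm', hmew]
        ring
      have hrz2 : r z - a = x1 + (m - a) := by simp only [hr, ← hm]; ring
      rw [hrz, hrz2]
      exact (AL (m - a) j (by omega) (by omega) hj1 hj2).symm
    · by_cases h2 : m - a < P
      · have : r (z - a) = r z - a := by
          simp only [hr, ← hm]
          rw [hm', Int.emod_eq_of_lt (by omega) h2]
          ring
        rw [this]
      · have hmew : (m - a) % P = m - a - P := by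
          have h := hmodeq (m - a) (-1) (by omega) (by omega)
          linarith
        have e1 : r z - a = (x1 + (m - a - P)) + P := by simp only [hr, ← hm]; ring
        have e2 : r (z - a) = x1 + (m - a - P) := by
          simp only [hr, ← hm]
          rw [hm', hmew]
        rw [e1, e2]
        exact AL (m - a - P) j (by omega) (by omega) hj1 hj2
  -- division facts
  have hdiv : ∀ y k j : ℤ, 0 ≤ j → j < b → y = b * k + j → y / b = k ∧ y % b = j := by
    intro y k j h1 h2 h3
    constructor
    · rw [h3, show b * k + j = j + k * b by ring,
        Int.add_mul_ediv_right _ _ (ne_of_gt hb), Int.ediv_eq_zero_of_lt h1 h2]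
      ring
    · rw [h3, show b * k + j = j + b * k by ring, Int.add_mul_emod_self_left,
        Int.emod_eq_of_lt h1 h2]
  have hjb0 : ∀ y : ℤ, 0 ≤ y % b := fun y => Int.emod_nonneg _ (ne_of_gt hb)
  have hjb1 : ∀ y : ℤ, y % b < b := fun y => Int.emod_lt_of_pos _ hb
  have hy : ∀ y : ℤ, y = b * (y / b) + y % b := fun y => (Int.mul_ediv_add_emod y b).symm
  -- the doubly periodic tiling
  set g : ℤ × ℤ → WangTile := fun p => f (r (p.1 - p.2 / b * a), p.2 % b) with hg
  have hgmem : ∀ p, g p ∈ T := fun p => hmem _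
  have hgew : ∀ x y : ℤ, (g (x, y)).east = (g (x + 1, y)).west := by
    intro x y
    simp only [hg]
    rw [show x + 1 - y / b * a = (x - y / b * a) + 1 by ring]
    exact L3 _ _ (hjb0 y) (hjb1 y)
  have hgns : ∀ x y : ℤ, (g (x, y)).north = (g (x, y + 1)).south := by
    intro x y
    simp only [hg]
    by_cases hj1 : y % b + 1 < b
    · have hd := hdiv (y + 1) (y / b) (y % b + 1) (by have := hjb0 y; omega) hj1
        (by have := hy y; linarith)
      rw [hd.1, hd.2]
      exact hns _ (y % b)
    · have hj2 : y % b + 1 = b := by have := hjb1 y; omega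
      have hd := hdiv (y + 1) (y / b + 1) 0 le_rfl hb
        (by have := hy y; linarith)
      rw [hd.1, hd.2]
      rw [show x - (y / b + 1) * a = (x - y / b * a) - a by ring]
      set z := x - y / b * a with hz
      have h1 : (f (r z, y % b)).north = (f (r z, b)).south := by
        have := hns (r z) (y % b)
        rwa [show y % b + 1 = b from hj2] at this
      have h2 : f (r z, b) = f (r z - a, 0) := by
        have := hper (r z - a, 0)
        rwa [show (r z - a, (0 : ℤ)) + (a, b) = (r z, b) by
          simp [Prod.ext_iff]] at this
      rw [h1, h2, L2 z 0 le_rfl hb]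
  -- periods
  have perP : (P, (0 : ℤ)) ∈ periods g := by
    intro p
    simp only [hg, Prod.fst_add, Prod.snd_add, add_zero]
    rw [show p.1 + P - p.2 / b * a = (p.1 - p.2 / b * a) + P by ring, hrP]
  have perV : ((a : ℤ), b) ∈ periods g := by
    intro p
    simp only [hg, Prod.fst_add, Prod.snd_add]
    have hd := hdiv (p.2 + b) (p.2 / b + 1) (p.2 % b) (hjb0 p.2) (hjb1 p.2)
      (by have := hy p.2; linarith)
    rw [hd.1, hd.2, show p.1 + a - (p.2 / b + 1) * a = p.1 - p.2 / b * a by ring]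
  have perQ : ((0 : ℤ), P * b) ∈ periods g := by
    have h := (periods g).sub_mem ((periods g).zsmul_mem perV P) ((periods g).zsmul_mem perP a)
    have e : P • ((a : ℤ), b) - a • ((P : ℤ), (0 : ℤ)) = ((0 : ℤ), P * b) := by
      simp only [Prod.smul_mk, smul_eq_mul, Prod.mk_sub_mk, Prod.mk.injEq]
      constructor <;> ring
    rwa [e] at h
  exact ⟨g, ⟨hgmem, hgew, hgns⟩, P, P * b, hP0, mul_pos hP0 hb, perP, perQ⟩

end WangAux
namespace WangAux

lemma dp_bne {T : Finset WangTile} {f : ℤ × ℤ → WangTile} (hf : IsWangTiling T f)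
    {a b : ℤ} (hb : b ≠ 0) (hper : ∀ p, f (p + (a, b)) = f p) :
    ∃ g, IsWangTiling T g ∧ ∃ P Q : ℤ, 0 < P ∧ 0 < Q ∧
      (∀ p, g (p + (P, 0)) = g p) ∧ (∀ p, g (p + (0, Q)) = g p) := by
  rcases hb.lt_or_gt with h | h
  · have hper' : ∀ p, f (p + (-a, -b)) = f p := by
      intro p
      have h2 := hper (p + (-a, -b))
      rw [show p + (-a, -b) + (a, b) = p by rw [Prod.ext_iff]; constructor <;> simp] at h2
      exact h2.symm
    exact core ⟨hf.1, hf.2.1, hf.2.2⟩ (by omega : (0 : ℤ) < -b) hper'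
  · exact core hf h hper

lemma dp {T : Finset WangTile} {f : ℤ × ℤ → WangTile} (hf : IsWangTiling T f)
    {v : ℤ × ℤ} (hv : v ≠ 0) (hper : ∀ p, f (p + v) = f p) :
    ∃ g, IsWangTiling T g ∧ ∃ P Q : ℤ, 0 < P ∧ 0 < Q ∧
      (∀ p, g (p + (P, 0)) = g p) ∧ (∀ p, g (p + (0, Q)) = g p) := by
  obtain ⟨aa, bb⟩ := v
  by_cases hb : bb = 0
  · subst hb
    have ha : aa ≠ 0 := by
      intro h; subst h; exact hv rfl
    have hf' := tiling_tr hf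
    have hper' : ∀ p : ℤ × ℤ,
        (fun p : ℤ × ℤ => tr (f p.swap)) (p + ((0 : ℤ), aa)) = tr (f p.swap) := by
      intro p
      show tr (f (p + ((0 : ℤ), aa)).swap) = tr (f p.swap)
      have hsw : (p + ((0 : ℤ), aa)).swap = p.swap + (aa, 0) := by
        rw [Prod.ext_iff]; constructor <;> simp
      rw [hsw, hper p.swap]
    obtain ⟨g', hg', P, Q, hP, hQ, h1, h2⟩ := dp_bne hf' ha hper'
    refine ⟨fun p => tr (g' p.swap), ?_, Q, P, hQ, hP, ?_, ?_⟩
    · have h := tiling_tr hg'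
      rwa [Finset.image_image, show tr ∘ tr = id from funext tr_tr, Finset.image_id] at h
    · intro p
      show tr (g' (p + ((Q : ℤ), (0 : ℤ))).swap) = tr (g' p.swap)
      rw [show (p + ((Q : ℤ), (0 : ℤ))).swap = p.swap + (0, Q) by
        rw [Prod.ext_iff]; constructor <;> simp]
      rw [h2 p.swap]
    · intro p
      show tr (g' (p + ((0 : ℤ), (P : ℤ))).swap) = tr (g' p.swap)
      rw [show (p + ((0 : ℤ), (P : ℤ))).swap = p.swap + (P, 0) by
        rw [Prod.ext_iff]; constructor <;> simp]
      rw [h1 p.swap]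
  · exact dp_bne hf hb hper

lemma getT_map_range {F : ℕ → WangTile} {N m : ℕ} (h : m < N) :
    getT ((List.range N).map F) m = F m := by
  simp [getT, List.getD_eq_getElem?_getD, List.getElem?_map, List.getElem?_range h]

lemma getT_mem {s : List WangTile} {m : ℕ} (h : m < s.length) : getT s m ∈ s := by
  rw [getT, List.getD_eq_getElem?_getD, List.getElem?_eq_getElem h]
  exact List.getElem_mem h

lemma idx_lt {i j n : ℕ} (hi : i < n) (hj : j < n) : i + n * j < n * n := by
  calc i + n * j < n + n * j := by omega
  _ = n * (j + 1) := by ring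
  _ ≤ n * n := Nat.mul_le_mul_left n (by omega)

lemma torus_of_dp {T : Finset WangTile} {g : ℤ × ℤ → WangTile} (hg : IsWangTiling T g)
    {P Q : ℤ} (hP : 0 < P) (hQ : 0 < Q)
    (h1 : ∀ p, g (p + (P, 0)) = g p) (h2 : ∀ p, g (p + (0, Q)) = g p) :
    ∃ n : ℕ, 1 ≤ n ∧ ∃ s ∈ tuples (elems T) (n * n), trB s n = true := by
  have hN : (0 : ℤ) < P * Q := mul_pos hP hQ
  have hN1 : ((P * Q : ℤ), (0 : ℤ)) ∈ periods g := by
    have h := (periods g).zsmul_mem (h1 : ((P : ℤ), (0 : ℤ)) ∈ periods g) Q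
    have e : Q • ((P : ℤ), (0 : ℤ)) = ((P * Q : ℤ), (0 : ℤ)) := by
      simp only [Prod.smul_mk, smul_eq_mul, Prod.mk.injEq]
      constructor <;> ring
    rwa [e] at h
  have hN2 : ((0 : ℤ), (P * Q : ℤ)) ∈ periods g := by
    have h := (periods g).zsmul_mem (h2 : ((0 : ℤ), (Q : ℤ)) ∈ periods g) P
    have e : P • ((0 : ℤ), (Q : ℤ)) = ((0 : ℤ), (P * Q : ℤ)) := by
      simp only [Prod.smul_mk, smul_eq_mul, Prod.mk.injEq]
      simp
    rwa [e] at h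
  set n : ℕ := (P * Q).toNat with hn
  have hnN : (n : ℤ) = P * Q := Int.toNat_of_nonneg (le_of_lt hN)
  have hn1 : 1 ≤ n := by omega
  set F : ℕ → WangTile := fun m => g (((m % n : ℕ) : ℤ), ((m / n : ℕ) : ℤ)) with hF
  refine ⟨n, hn1, (List.range (n * n)).map F, ?_, ?_⟩
  · refine mem_tuples.2 ⟨by simp, ?_⟩
    intro t ht
    rw [List.mem_map] at ht
    obtain ⟨m, -, rfl⟩ := ht
    exact mem_elems.2 (hg.1 _)
  · rw [trB_iff]
    refine ⟨hn1, ?_⟩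
    intro i j hi hj
    have hgetij : ∀ i' j' : ℕ, i' < n → j' < n →
        getT ((List.range (n * n)).map F) (i' + n * j') = g ((i' : ℤ), (j' : ℤ)) := by
      intro i' j' hi' hj'
      rw [getT_map_range (idx_lt hi' hj')]
      simp only [hF]
      rw [Nat.add_mul_mod_self_left, Nat.mod_eq_of_lt hi',
        Nat.add_mul_div_left _ _ (by omega : 0 < n), Nat.div_eq_of_lt hi']
      norm_num
    constructor
    · by_cases hi1 : i + 1 < n
      · rw [hgetij i j hi hj, Nat.mod_eq_of_lt hi1, hgetij (i + 1) j hi1 hj]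
        have := hg.2.1 (i : ℤ) (j : ℤ)
        rwa [show ((i : ℤ) + 1) = ((i + 1 : ℕ) : ℤ) by push_cast; ring] at this
      · have hi2 : i + 1 = n := by omega
        rw [hgetij i j hi hj, hi2, Nat.mod_self, hgetij 0 j hn1 hj]
        have hper := hN1 (((0 : ℤ), (j : ℤ)))
        rw [show ((0 : ℤ), (j : ℤ)) + ((P * Q : ℤ), (0 : ℤ)) = ((P * Q : ℤ), (j : ℤ)) by
          rw [Prod.ext_iff]; constructor <;> simp] at hper
        have hstep := hg.2.1 (i : ℤ) (j : ℤ)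
        rw [show ((i : ℤ) + 1) = (P * Q : ℤ) by omega, hper] at hstep
        simpa using hstep
    · by_cases hj1 : j + 1 < n
      · rw [hgetij i j hi hj, Nat.mod_eq_of_lt hj1, hgetij i (j + 1) hi hj1]
        have := hg.2.2 (i : ℤ) (j : ℤ)
        rwa [show ((j : ℤ) + 1) = ((j + 1 : ℕ) : ℤ) by push_cast; ring] at this
      · have hj2 : j + 1 = n := by omega
        rw [hgetij i j hi hj, hj2, Nat.mod_self, hgetij i 0 hi hn1]
        have hper := hN2 (((i : ℤ), (0 : ℤ)))
        rw [show ((i : ℤ), (0 : ℤ)) + ((0 : ℤ), (P * Q : ℤ)) = ((i : ℤ), (P * Q : ℤ)) by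
          rw [Prod.ext_iff]; constructor <;> simp] at hper
        have hstep := hg.2.2 (i : ℤ) (j : ℤ)
        rw [show ((j : ℤ) + 1) = (P * Q : ℤ) by omega, hper] at hstep
        simpa using hstep

lemma square_witness {T : Finset WangTile} {f : ℤ × ℤ → WangTile} (hf : IsWangTiling T f)
    (n : ℕ) : ∃ s ∈ tuples (elems T) (n * n), sqB s n = true := by
  set F : ℕ → WangTile := fun m => f (((m % n : ℕ) : ℤ), ((m / n : ℕ) : ℤ)) with hF
  refine ⟨(List.range (n * n)).map F, ?_, ?_⟩
  · refine mem_tuples.2 ⟨by simp, ?_⟩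
    intro t ht
    rw [List.mem_map] at ht
    obtain ⟨m, -, rfl⟩ := ht
    exact mem_elems.2 (hf.1 _)
  · rw [sqB_iff]
    intro i j hi hj
    have hgetij : ∀ i' j' : ℕ, i' < n → j' < n →
        getT ((List.range (n * n)).map F) (i' + n * j') = f ((i' : ℤ), (j' : ℤ)) := by
      intro i' j' hi' hj'
      rw [getT_map_range (idx_lt hi' hj')]
      simp only [hF]
      rw [Nat.add_mul_mod_self_left, Nat.mod_eq_of_lt hi',
        Nat.add_mul_div_left _ _ (by omega : 0 < n), Nat.div_eq_of_lt hi']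
      norm_num
    constructor
    · intro hi1
      rw [hgetij i j hi hj, show i + 1 + n * j = (i + 1) + n * j by ring,
        hgetij (i + 1) j hi1 hj]
      have := hf.2.1 (i : ℤ) (j : ℤ)
      rwa [show ((i : ℤ) + 1) = ((i + 1 : ℕ) : ℤ) by push_cast; ring] at this
    · intro hj1
      rw [hgetij i j hi hj, hgetij i (j + 1) hi hj1]
      have := hf.2.2 (i : ℤ) (j : ℤ)
      rwa [show ((j : ℤ) + 1) = ((j + 1 : ℕ) : ℤ) by push_cast; ring] at this

end WangAux
namespace WangAux

lemma compactness {T : Finset WangTile}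
    (H : ∀ k : ℕ, ∃ s ∈ tuples (elems T) ((2 * k + 1) * (2 * k + 1)),
      sqB s (2 * k + 1) = true) :
    WangTiles T := by
  choose s hs hsq using H
  set G : ℕ → ℤ × ℤ → WangTile :=
    fun k p => getT (s k) ((p.1 + k).toNat + (2 * k + 1) * (p.2 + k).toNat) with hG
  have hlen : ∀ k, (s k).length = (2 * k + 1) * (2 * k + 1) := fun k => (mem_tuples.1 (hs k)).1
  have hmemT : ∀ (k : ℕ) (p : ℤ × ℤ), -(k : ℤ) ≤ p.1 → p.1 ≤ k → -(k : ℤ) ≤ p.2 → p.2 ≤ k →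
      G k p ∈ T := by
    intro k p h1 h2 h3 h4
    have hidx : (p.1 + k).toNat + (2 * k + 1) * (p.2 + k).toNat < (2 * k + 1) * (2 * k + 1) :=
      idx_lt (by omega) (by omega)
    have hm : (p.1 + k).toNat + (2 * k + 1) * (p.2 + k).toNat < (s k).length := by
      rw [hlen k]; exact hidx
    exact mem_elems.1 ((mem_tuples.1 (hs k)).2 _ (getT_mem hm))
  have hHm : ∀ (k : ℕ) (x y : ℤ), -(k : ℤ) ≤ x → x + 1 ≤ k → -(k : ℤ) ≤ y → y ≤ k →
      (G k (x, y)).east = (G k (x + 1, y)).west := by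
    intro k x y h1 h2 h3 h4
    have hsq' := sqB_iff.1 (hsq k) ((x + k).toNat) ((y + k).toNat) (by omega) (by omega)
    have heast := hsq'.1 (by omega)
    simp only [hG]
    have e1 : (x + 1 + (k : ℤ)).toNat = (x + k).toNat + 1 := by omega
    rw [e1]
    exact heast
  have hVm : ∀ (k : ℕ) (x y : ℤ), -(k : ℤ) ≤ x → x ≤ k → -(k : ℤ) ≤ y → y + 1 ≤ k →
      (G k (x, y)).north = (G k (x, y + 1)).south := by
    intro k x y h1 h2 h3 h4
    have hsq' := sqB_iff.1 (hsq k) ((x + k).toNat) ((y + k).toNat) (by omega) (by omega)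
    have hnorth := hsq'.2 (by omega)
    simp only [hG]
    have e1 : (y + 1 + (k : ℤ)).toNat = (y + k).toNat + 1 := by omega
    rw [e1]
    exact hnorth
  set U : Ultrafilter ℕ := Ultrafilter.of Filter.cofinite with hUdef
  have hUc : ∀ m : ℕ, {k : ℕ | m ≤ k} ∈ U := by
    intro m
    have hc : {k : ℕ | m ≤ k} ∈ (Filter.cofinite : Filter ℕ) := by
      rw [Filter.mem_cofinite]
      apply Set.Finite.subset (Set.finite_Iio m)
      intro k hk
      simp only [Set.mem_compl_iff, Set.mem_setOf_eq, not_le] at hk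
      simpa using hk
    exact Filter.le_def.1 (Ultrafilter.of_le Filter.cofinite) _ hc
  have hex : ∀ p : ℤ × ℤ, ∃ t ∈ T, {k : ℕ | G k p = t} ∈ U := by
    intro p
    have hbig : {k : ℕ | p.1.natAbs + p.2.natAbs ≤ k} ∈ U := hUc _
    have hsub : {k : ℕ | p.1.natAbs + p.2.natAbs ≤ k} ⊆
        ⋃ t ∈ (T : Set WangTile), {k : ℕ | G k p = t} := by
      intro k hk
      simp only [Set.mem_setOf_eq] at hk
      have hmem := hmemT k p (by omega) (by omega) (by omega) (by omega)
      exact Set.mem_biUnion hmem rfl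
    have hun : (⋃ t ∈ (T : Set WangTile), {k : ℕ | G k p = t}) ∈ U :=
      Filter.mem_of_superset hbig hsub
    exact (Ultrafilter.finite_biUnion_mem_iff T.finite_toSet).1 hun
  choose F hFT hFU using hex
  refine ⟨F, fun p => hFT p, ?_, ?_⟩
  · intro x y
    have h3 := hUc (x.natAbs + y.natAbs + 2)
    have hins := Filter.inter_mem (Filter.inter_mem (hFU (x, y)) (hFU (x + 1, y))) h3
    obtain ⟨k, ⟨hk1, hk2⟩, hk3⟩ := Filter.nonempty_of_mem hins
    simp only [Set.mem_setOf_eq] at hk1 hk2 hk3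
    rw [← hk1, ← hk2]
    exact hHm k x y (by omega) (by omega) (by omega) (by omega)
  · intro x y
    have h3 := hUc (x.natAbs + y.natAbs + 2)
    have hins := Filter.inter_mem (Filter.inter_mem (hFU (x, y)) (hFU (x, y + 1))) h3
    obtain ⟨k, ⟨hk1, hk2⟩, hk3⟩ := Filter.nonempty_of_mem hins
    simp only [Set.mem_setOf_eq] at hk1 hk2 hk3
    rw [← hk1, ← hk2]
    exact hVm k x y (by omega) (by omega) (by omega) (by omega)

end WangAux
namespace WangAux

open Primrec

section PrimrecLemmas

set_option linter.unusedSectionVars false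

variable {α β : Type*} [Primcodable α] [Primcodable β]

lemma all_eq_foldr (l : List β) (p : β → Bool) :
    l.all p = l.foldr (fun b r => p b && r) true := by
  induction l with
  | nil => rfl
  | cons a l ih => simp [List.all_cons, ih]

lemma any_eq_foldr (l : List β) (p : β → Bool) :
    l.any p = l.foldr (fun b r => p b || r) false := by
  induction l with
  | nil => rfl
  | cons a l ih => simp [List.any_cons, ih]

lemma primrec_list_all {f : α → List β} {p : α → β → Bool}
    (hf : Primrec f) (hp : Primrec₂ p) : Primrec fun a => (f a).all (p a) := by
  have h := Primrec.list_foldr hf (Primrec.const true)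
    (((Primrec.dom_bool₂ (· && ·)).comp
      (hp.comp Primrec.fst (Primrec.fst.comp Primrec.snd))
      (Primrec.snd.comp Primrec.snd)).to₂ :
      Primrec₂ fun (a : α) (q : β × Bool) => p a q.1 && q.2)
  exact h.of_eq fun a => ((all_eq_foldr (f a) (p a)).symm :
    (f a).foldr (fun b r => p a b && r) true = (f a).all (p a))

lemma primrec_list_any {f : α → List β} {p : α → β → Bool}
    (hf : Primrec f) (hp : Primrec₂ p) : Primrec fun a => (f a).any (p a) := by
  have h := Primrec.list_foldr hf (Primrec.const false)
    (((Primrec.dom_bool₂ (· || ·)).comp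
      (hp.comp Primrec.fst (Primrec.fst.comp Primrec.snd))
      (Primrec.snd.comp Primrec.snd)).to₂ :
      Primrec₂ fun (a : α) (q : β × Bool) => p a q.1 || q.2)
  exact h.of_eq fun a => ((any_eq_foldr (f a) (p a)).symm :
    (f a).foldr (fun b r => p a b || r) false = (f a).any (p a))

end PrimrecLemmas

lemma getT_primrec : Primrec₂ getT := Primrec.list_getD ((0, 0, 0, 0) : WangTile)

lemma north_primrec : Primrec WangTile.north := Primrec.fst
lemma south_primrec : Primrec WangTile.south := Primrec.fst.comp Primrec.snd
lemma east_primrec : Primrec WangTile.east :=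
  Primrec.fst.comp (Primrec.snd.comp Primrec.snd)
lemma west_primrec : Primrec WangTile.west :=
  Primrec.snd.comp (Primrec.snd.comp Primrec.snd)

lemma sqB_primrec : Primrec₂ sqB := by
  have hinner : Primrec fun z : ((List WangTile × ℕ) × ℕ) × ℕ =>
      ((!decide (z.2 + 1 < z.1.1.2)) ||
        decide ((getT z.1.1.1 (z.2 + z.1.1.2 * z.1.2)).east =
          (getT z.1.1.1 (z.2 + 1 + z.1.1.2 * z.1.2)).west)) &&
      ((!decide (z.1.2 + 1 < z.1.1.2)) ||
        decide ((getT z.1.1.1 (z.2 + z.1.1.2 * z.1.2)).north =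
          (getT z.1.1.1 (z.2 + z.1.1.2 * (z.1.2 + 1))).south)) := by
    have hs : Primrec fun z : ((List WangTile × ℕ) × ℕ) × ℕ => z.1.1.1 :=
      Primrec.fst.comp (Primrec.fst.comp Primrec.fst)
    have hn : Primrec fun z : ((List WangTile × ℕ) × ℕ) × ℕ => z.1.1.2 :=
      Primrec.snd.comp (Primrec.fst.comp Primrec.fst)
    have hj : Primrec fun z : ((List WangTile × ℕ) × ℕ) × ℕ => z.1.2 :=
      Primrec.snd.comp Primrec.fst
    have hi : Primrec fun z : ((List WangTile × ℕ) × ℕ) × ℕ => z.2 := Primrec.snd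
    have hidx1 : Primrec fun z : ((List WangTile × ℕ) × ℕ) × ℕ => z.2 + z.1.1.2 * z.1.2 :=
      Primrec.nat_add.comp hi (Primrec.nat_mul.comp hn hj)
    have hidx2 : Primrec fun z : ((List WangTile × ℕ) × ℕ) × ℕ =>
        z.2 + 1 + z.1.1.2 * z.1.2 :=
      Primrec.nat_add.comp (Primrec.succ.comp hi) (Primrec.nat_mul.comp hn hj)
    have hidx3 : Primrec fun z : ((List WangTile × ℕ) × ℕ) × ℕ =>
        z.2 + z.1.1.2 * (z.1.2 + 1) :=
      Primrec.nat_add.comp hi (Primrec.nat_mul.comp hn (Primrec.succ.comp hj))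
    have ht1 := getT_primrec.comp hs hidx1
    have ht2 := getT_primrec.comp hs hidx2
    have ht3 := getT_primrec.comp hs hidx3
    have hb1 : Primrec fun z : ((List WangTile × ℕ) × ℕ) × ℕ =>
        !decide (z.2 + 1 < z.1.1.2) :=
      Primrec.not.comp (Primrec.nat_lt.comp (Primrec.succ.comp hi) hn).decide
    have hb2 : Primrec fun z : ((List WangTile × ℕ) × ℕ) × ℕ =>
        !decide (z.1.2 + 1 < z.1.1.2) :=
      Primrec.not.comp (Primrec.nat_lt.comp (Primrec.succ.comp hj) hn).decide
    have he : Primrec fun z : ((List WangTile × ℕ) × ℕ) × ℕ =>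
        decide ((getT z.1.1.1 (z.2 + z.1.1.2 * z.1.2)).east =
          (getT z.1.1.1 (z.2 + 1 + z.1.1.2 * z.1.2)).west) :=
      (Primrec.eq.comp (east_primrec.comp ht1) (west_primrec.comp ht2)).decide
    have hv : Primrec fun z : ((List WangTile × ℕ) × ℕ) × ℕ =>
        decide ((getT z.1.1.1 (z.2 + z.1.1.2 * z.1.2)).north =
          (getT z.1.1.1 (z.2 + z.1.1.2 * (z.1.2 + 1))).south) :=
      (Primrec.eq.comp (north_primrec.comp ht1) (south_primrec.comp ht3)).decide
    exact (Primrec.dom_bool₂ (· && ·)).comp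
      ((Primrec.dom_bool₂ (· || ·)).comp hb1 he)
      ((Primrec.dom_bool₂ (· || ·)).comp hb2 hv)
  have hmid : Primrec fun y : (List WangTile × ℕ) × ℕ =>
      (List.range y.1.2).all fun i =>
        ((!decide (i + 1 < y.1.2)) ||
          decide ((getT y.1.1 (i + y.1.2 * y.2)).east =
            (getT y.1.1 (i + 1 + y.1.2 * y.2)).west)) &&
        ((!decide (y.2 + 1 < y.1.2)) ||
          decide ((getT y.1.1 (i + y.1.2 * y.2)).north =
            (getT y.1.1 (i + y.1.2 * (y.2 + 1))).south)) :=
    primrec_list_all (Primrec.list_range.comp (Primrec.snd.comp Primrec.fst)) hinner.to₂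
  have houter : Primrec fun x : List WangTile × ℕ => sqB x.1 x.2 := by
    have := primrec_list_all (f := fun x : List WangTile × ℕ => List.range x.2)
      (Primrec.list_range.comp Primrec.snd) hmid.to₂
    exact this.of_eq fun x => rfl
  exact houter.to₂.of_eq fun a b => rfl

lemma trB_primrec : Primrec₂ trB := by
  have hinner : Primrec fun z : ((List WangTile × ℕ) × ℕ) × ℕ =>
      decide ((getT z.1.1.1 (z.2 + z.1.1.2 * z.1.2)).east =
          (getT z.1.1.1 ((z.2 + 1) % z.1.1.2 + z.1.1.2 * z.1.2)).west) &&
      decide ((getT z.1.1.1 (z.2 + z.1.1.2 * z.1.2)).north =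
          (getT z.1.1.1 (z.2 + z.1.1.2 * ((z.1.2 + 1) % z.1.1.2))).south) := by
    have hs : Primrec fun z : ((List WangTile × ℕ) × ℕ) × ℕ => z.1.1.1 :=
      Primrec.fst.comp (Primrec.fst.comp Primrec.fst)
    have hn : Primrec fun z : ((List WangTile × ℕ) × ℕ) × ℕ => z.1.1.2 :=
      Primrec.snd.comp (Primrec.fst.comp Primrec.fst)
    have hj : Primrec fun z : ((List WangTile × ℕ) × ℕ) × ℕ => z.1.2 :=
      Primrec.snd.comp Primrec.fst
    have hi : Primrec fun z : ((List WangTile × ℕ) × ℕ) × ℕ => z.2 := Primrec.snd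
    have hidx1 : Primrec fun z : ((List WangTile × ℕ) × ℕ) × ℕ => z.2 + z.1.1.2 * z.1.2 :=
      Primrec.nat_add.comp hi (Primrec.nat_mul.comp hn hj)
    have hidx2 : Primrec fun z : ((List WangTile × ℕ) × ℕ) × ℕ =>
        (z.2 + 1) % z.1.1.2 + z.1.1.2 * z.1.2 :=
      Primrec.nat_add.comp (Primrec.nat_mod.comp (Primrec.succ.comp hi) hn)
        (Primrec.nat_mul.comp hn hj)
    have hidx3 : Primrec fun z : ((List WangTile × ℕ) × ℕ) × ℕ =>
        z.2 + z.1.1.2 * ((z.1.2 + 1) % z.1.1.2) :=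
      Primrec.nat_add.comp hi
        (Primrec.nat_mul.comp hn (Primrec.nat_mod.comp (Primrec.succ.comp hj) hn))
    have ht1 := getT_primrec.comp hs hidx1
    have ht2 := getT_primrec.comp hs hidx2
    have ht3 := getT_primrec.comp hs hidx3
    exact (Primrec.dom_bool₂ (· && ·)).comp
      (Primrec.eq.comp (east_primrec.comp ht1) (west_primrec.comp ht2)).decide
      (Primrec.eq.comp (north_primrec.comp ht1) (south_primrec.comp ht3)).decide
  have hmid : Primrec fun y : (List WangTile × ℕ) × ℕ =>
      (List.range y.1.2).all fun i =>
        decide ((getT y.1.1 (i + y.1.2 * y.2)).east =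
            (getT y.1.1 ((i + 1) % y.1.2 + y.1.2 * y.2)).west) &&
        decide ((getT y.1.1 (i + y.1.2 * y.2)).north =
            (getT y.1.1 (i + y.1.2 * ((y.2 + 1) % y.1.2))).south) :=
    primrec_list_all (Primrec.list_range.comp (Primrec.snd.comp Primrec.fst)) hinner.to₂
  have houter : Primrec fun x : List WangTile × ℕ => trB x.1 x.2 := by
    have hall := primrec_list_all (f := fun x : List WangTile × ℕ => List.range x.2)
      (Primrec.list_range.comp Primrec.snd) hmid.to₂
    have := (Primrec.dom_bool₂ (· && ·)).comp
      (Primrec.nat_le.comp (Primrec.const 1) Primrec.snd).decide hall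
    exact this.of_eq fun x => rfl
  exact houter.to₂.of_eq fun a b => rfl

end WangAux
namespace WangAux

open Denumerable Encodable

lemma tuples_eq (l : List WangTile) (n : ℕ) :
    tuples l n =
      Nat.rec [[]] (fun _ ih => ih.flatMap fun s => l.map (· :: s)) n := by
  induction n with
  | zero => rfl
  | succ k ih => simp only [tuples, ih]

lemma tuples_primrec : Primrec₂ tuples := by
  have hg : Primrec₂ fun (l : List WangTile) (q : ℕ × List (List WangTile)) =>
      q.2.flatMap fun s => l.map (· :: s) := by
    have hcons : Primrec₂ fun (y : (List WangTile × (ℕ × List (List WangTile))) × List WangTile)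
        (t : WangTile) => t :: y.2 :=
      (Primrec.list_cons.comp Primrec.snd
        (Primrec.snd.comp Primrec.fst)).to₂
    have hmap : Primrec₂ fun (x : List WangTile × (ℕ × List (List WangTile)))
        (s : List WangTile) => x.1.map (· :: s) := by
      have := Primrec.list_map
        (f := fun y : (List WangTile × (ℕ × List (List WangTile))) × List WangTile => y.1.1)
        (g := fun y (t : WangTile) => t :: y.2)
        (Primrec.fst.comp Primrec.fst) hcons
      exact this.to₂
    have := Primrec.list_flatMap
      (f := fun x : List WangTile × (ℕ × List (List WangTile)) => x.2.2)
      (g := fun x (s : List WangTile) => x.1.map (· :: s))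
      (Primrec.snd.comp Primrec.snd) hmap
    exact this.to₂
  have h := Primrec.nat_rec (f := fun _ : List WangTile => ([[]] : List (List WangTile)))
    (Primrec.const _) hg
  exact h.of_eq fun l n => (tuples_eq l n).symm

lemma elems_primrec : Primrec elems := by
  have henc : Primrec fun T : Finset WangTile => eqv (Finset WangTile) T := Primrec.encode
  have hofnat : Primrec fun T : Finset WangTile => ofNat (List ℕ) (eqv (Finset WangTile) T) :=
    (Primrec.ofNat (List ℕ)).comp henc
  have hstep : Primrec₂ fun (_ : List ℕ) (q : (ℕ × List ℕ) × ℕ) => raiseStep q.1 q.2 := by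
    have hm : Primrec fun x : List ℕ × ((ℕ × List ℕ) × ℕ) => x.2.2 :=
      Primrec.snd.comp Primrec.snd
    have hcur : Primrec fun x : List ℕ × ((ℕ × List ℕ) × ℕ) => x.2.1.1 :=
      Primrec.fst.comp (Primrec.fst.comp Primrec.snd)
    have hout : Primrec fun x : List ℕ × ((ℕ × List ℕ) × ℕ) => x.2.1.2 :=
      Primrec.snd.comp (Primrec.fst.comp Primrec.snd)
    have hval : Primrec fun x : List ℕ × ((ℕ × List ℕ) × ℕ) => x.2.2 + x.2.1.1 :=
      Primrec.nat_add.comp hm hcur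
    exact ((Primrec.succ.comp hval).pair (Primrec.list_concat.comp hout hval)).to₂
  have hfold : Primrec fun l : List ℕ => (l.foldl raiseStep (0, ([] : List ℕ))).2 := by
    have h := Primrec.list_foldl (f := @id (List ℕ)) (g := fun _ => ((0 : ℕ), ([] : List ℕ)))
      (h := fun (_ : List ℕ) (q : (ℕ × List ℕ) × ℕ) => raiseStep q.1 q.2)
      Primrec.id (Primrec.const _) hstep
    exact Primrec.snd.comp (h.of_eq fun l => rfl)
  have hraise : Primrec fun T : Finset WangTile =>
      raiseF (ofNat (List ℕ) (eqv (Finset WangTile) T)) := hfold.comp hofnat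
  have := Primrec.list_map (f := fun T : Finset WangTile =>
      raiseF (ofNat (List ℕ) (eqv (Finset WangTile) T)))
    (g := fun (_ : Finset WangTile) (k : ℕ) => ofNat WangTile k)
    hraise ((Primrec.ofNat WangTile).comp Primrec.snd).to₂
  exact this.of_eq fun T => rfl

def anyT (T : Finset WangTile) (n : ℕ) : Bool :=
  (tuples (elems T) (n * n)).any fun s => trB s n

def anyS (T : Finset WangTile) (n : ℕ) : Bool :=
  (tuples (elems T) (n * n)).any fun s => sqB s n

def stepB (T : Finset WangTile) (n : ℕ) : Bool := anyT T n || !anyS T n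

lemma anyT_primrec : Primrec₂ anyT := by
  have h := primrec_list_any
    (f := fun x : Finset WangTile × ℕ => tuples (elems x.1) (x.2 * x.2))
    (p := fun (x : Finset WangTile × ℕ) (s : List WangTile) => trB s x.2)
    (tuples_primrec.comp (elems_primrec.comp Primrec.fst)
      (Primrec.nat_mul.comp Primrec.snd Primrec.snd))
    (trB_primrec.comp Primrec.snd (Primrec.snd.comp Primrec.fst))
  exact h.to₂
lemma anyS_primrec : Primrec₂ anyS := by
  have h := primrec_list_any
    (f := fun x : Finset WangTile × ℕ => tuples (elems x.1) (x.2 * x.2))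
    (p := fun (x : Finset WangTile × ℕ) (s : List WangTile) => sqB s x.2)
    (tuples_primrec.comp (elems_primrec.comp Primrec.fst)
      (Primrec.nat_mul.comp Primrec.snd Primrec.snd))
    (sqB_primrec.comp Primrec.snd (Primrec.snd.comp Primrec.fst))
  exact h.to₂
lemma stepB_primrec : Primrec₂ stepB := by
  have h := (Primrec.dom_bool₂ (· || ·)).comp
    (anyT_primrec.comp Primrec.fst Primrec.snd)
    (Primrec.not.comp (anyS_primrec.comp Primrec.fst Primrec.snd))
  exact h.to₂

lemma tiling_of_torus {T : Finset WangTile} {n : ℕ} {s : List WangTile}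
    (hmem : s ∈ tuples (elems T) (n * n)) (h : trB s n = true) : WangTiles T := by
  obtain ⟨hn1, hcond⟩ := trB_iff.1 h
  obtain ⟨hlen, hel⟩ := mem_tuples.1 hmem
  have hnz : (0 : ℤ) < (n : ℤ) := by exact_mod_cast hn1
  have hmod0 : ∀ x : ℤ, 0 ≤ x % (n : ℤ) := fun x => Int.emod_nonneg _ (by omega)
  have hmod1 : ∀ x : ℤ, x % (n : ℤ) < (n : ℤ) := fun x => Int.emod_lt_of_pos _ hnz
  set F : ℤ × ℤ → WangTile :=
    fun p => getT s ((p.1 % (n : ℤ)).toNat + n * (p.2 % (n : ℤ)).toNat) with hF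
  have hidxlt : ∀ p : ℤ × ℤ,
      (p.1 % (n : ℤ)).toNat + n * (p.2 % (n : ℤ)).toNat < n * n := by
    intro p
    have h1 := hmod0 p.1; have h2 := hmod1 p.1
    have h3 := hmod0 p.2; have h4 := hmod1 p.2
    exact idx_lt (by omega) (by omega)
  have hsucc : ∀ x : ℤ, (x + 1) % (n : ℤ) = (((x % (n : ℤ)).toNat + 1) % n : ℕ) := by
    intro x
    have hx : x = x % (n : ℤ) + (n : ℤ) * (x / (n : ℤ)) := by
      have := Int.mul_ediv_add_emod x (n : ℤ); linarith
    have h1 := hmod0 x; have h2 := hmod1 x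
    have : (x + 1) % (n : ℤ) = ((x % (n : ℤ)) + 1) % (n : ℤ) := by
      conv_lhs => rw [show x + 1 = ((x % (n : ℤ)) + 1) + (n : ℤ) * (x / (n : ℤ)) by linarith]
      exact Int.add_mul_emod_self_left _ _ _
    rw [this]
    rw [show (x % (n : ℤ)) + 1 = (((x % (n : ℤ)).toNat + 1 : ℕ) : ℤ) by omega]
    push_cast
    rfl
  refine ⟨F, ?_, ?_, ?_⟩
  · intro p
    have := getT_mem (s := s) (m := (p.1 % (n : ℤ)).toNat + n * (p.2 % (n : ℤ)).toNat)
      (by rw [hlen]; exact hidxlt p)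
    exact mem_elems.1 (hel _ this)
  · intro x y
    simp only [hF]
    have e := hsucc x
    have hi := hmod0 x; have hi2 := hmod1 x
    have hj := hmod0 y; have hj2 := hmod1 y
    rw [e]
    simp only [Int.toNat_natCast]
    exact (hcond ((x % (n : ℤ)).toNat) ((y % (n : ℤ)).toNat) (by omega) (by omega)).1
  · intro x y
    simp only [hF]
    have e := hsucc y
    have hi := hmod0 x; have hi2 := hmod1 x
    have hj := hmod0 y; have hj2 := hmod1 y
    rw [e]
    simp only [Int.toNat_natCast]
    exact (hcond ((x % (n : ℤ)).toNat) ((y % (n : ℤ)).toNat) (by omega) (by omega)).2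

end WangAux

open WangAux in
/-- **If there are no aperiodic tile sets, the Tiling Problem is decidable.**
If every Wang tile set that admits a tiling of the plane also admits a periodic
tiling, then the Tiling Problem (does a given tile set tile the plane?) is
decidable: enumerate configurations on larger and larger squares until either no
configuration extends (answer No) or a fundamental domain is found (answer Yes).
Contrapositively, undecidability of the Tiling Problem implies the existence of an
aperiodic set of tiles. -/
theorem tilingProblem_decidable_of_no_aperiodic_set
    (h : ∀ T : Finset WangTile, WangTiles T → WangTilesPeriodically T) :
    ComputablePred WangTiles := by
  classical
  have torus_sound : ∀ (T : Finset WangTile) (n : ℕ), anyT T n = true → WangTiles T := by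
    intro T n hn
    rw [anyT, List.any_eq_true] at hn
    obtain ⟨s, hsmem, htrB⟩ := hn
    exact tiling_of_torus hsmem htrB
  have square_true : ∀ T : Finset WangTile, WangTiles T → ∀ n, anyS T n = true := by
    intro T hW n
    obtain ⟨f, hf⟩ := hW
    obtain ⟨s, hsmem, hsq⟩ := square_witness hf n
    rw [anyS, List.any_eq_true]
    exact ⟨s, hsmem, hsq⟩
  have torus_true : ∀ T : Finset WangTile, WangTiles T → ∃ n, anyT T n = true := by
    intro T hW
    obtain ⟨f, hf, v, hv, hper⟩ := h T hW
    obtain ⟨g, hg, P, Q, hP, hQ, h1, h2⟩ := dp hf hv hper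
    obtain ⟨n, hn1, s, hsmem, htrB⟩ := torus_of_dp hg hP hQ h1 h2
    exact ⟨n, by rw [anyT, List.any_eq_true]; exact ⟨s, hsmem, htrB⟩⟩
  have square_fail : ∀ T : Finset WangTile, ¬WangTiles T → ∃ n, anyS T n = false := by
    intro T hW
    by_contra hcon
    push_neg at hcon
    apply hW
    apply compactness
    intro k
    have htrue : anyS T (2 * k + 1) = true := by
      cases hAS : anyS T (2 * k + 1) with
      | false => exact absurd hAS (hcon _)
      | true => rfl
    rw [anyS, List.any_eq_true] at htrue
    obtain ⟨s, hm, hs⟩ := htrue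
    exact ⟨s, hm, hs⟩
  have hterm : ∀ T : Finset WangTile, ∃ n, stepB T n = true := by
    intro T
    by_cases hW : WangTiles T
    · obtain ⟨n, hn⟩ := torus_true T hW
      exact ⟨n, by simp [stepB, hn]⟩
    · obtain ⟨n, hn⟩ := square_fail T hW
      exact ⟨n, by simp [stepB, hn]⟩
  have hstepC : Computable₂ stepB := stepB_primrec.to_comp
  have hanyC : Computable₂ anyT := anyT_primrec.to_comp
  have hFpart : Partrec fun T : Finset WangTile =>
      (Nat.rfind fun n => Part.some (stepB T n)).map fun n => anyT T n := by
    have hrf := Partrec.rfind hstepC.partrec₂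
    exact hrf.map hanyC
  have hmemF : ∀ T : Finset WangTile,
      decide (WangTiles T) ∈
        ((Nat.rfind fun n => Part.some (stepB T n)).map fun n => anyT T n) := by
    intro T
    obtain ⟨n, hn⟩ := hterm T
    have hdom : (Nat.rfind fun n => Part.some (stepB T n)).Dom := by
      exact Nat.rfind_dom.2 ⟨n, Part.mem_some_iff.2 hn.symm, fun {m} _ => trivial⟩
    have hmem₀ : (Nat.rfind fun n => Part.some (stepB T n)).get hdom ∈
        Nat.rfind fun n => Part.some (stepB T n) := Part.get_mem hdom
    set n₀ := (Nat.rfind fun n => Part.some (stepB T n)).get hdom with hn₀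
    have hspec : stepB T n₀ = true := by simpa using Nat.rfind_spec hmem₀
    have hval : anyT T n₀ = decide (WangTiles T) := by
      by_cases hW : WangTiles T
      · have hsq := square_true T hW n₀
        have hT : anyT T n₀ = true := by
          rw [stepB, hsq] at hspec
          simpa using hspec
        rw [hT, decide_eq_true hW]
      · have hF : anyT T n₀ = false := by
          cases hA : anyT T n₀ with
          | true => exact absurd (torus_sound T n₀ hA) hW
          | false => rfl
        rw [hF]
        simp [hW]
    rw [← hval]
    exact Part.mem_map _ hmem₀
  have hcomp : Computable fun T : Finset WangTile => decide (WangTiles T) :=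
    Partrec.of_eq_tot hFpart hmemF
  rw [ComputablePred.computable_iff]
  exact ⟨_, hcomp, funext fun T => (decide_eq_true_eq).symm⟩
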